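/- Let b₁ < b₂ < ⋯ < b_d be real numbers and Γ(t) = (b₁⁻¹e^{b₁t}, …, b_d⁻¹e^{b_dt}) (with all b_i ≠ 0), and for κ ∈ ℝ^d let γ_κ(t) = ∑_{j=1}^d Γ(t+κ_j). Then γ_κ(t) = E(κ)·Γ(t) where E(κ) is the diagonal matrix with entries E_{ii}(κ) = ∑_{j=1}^d e^{b_i κ_j}; consequently the torsion satisfies |τ_{γ_κ}(t)| = |τ_Γ(t)| · ∏_{i=1}^d E_{ii}(κ), and |τ_{γ_κ}(t)| ≥ |τ_Γ(t+κ_j)| for every j = 1,…,d. -/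

import Mathlib

lemma itd_exp (a c : ℝ) (n : ℕ) :
    iteratedDeriv n (fun u => a * Real.exp (c * u)) = fun t => a * c ^ n * Real.exp (c * t) := by
  induction n with
  | zero => simp [iteratedDeriv_zero]
  | succ n ih =>
    funext t
    rw [iteratedDeriv_succ, ih]
    have h : HasDerivAt (fun t => a * c ^ n * Real.exp (c * t))
        (a * c ^ (n + 1) * Real.exp (c * t)) t := by
      have := (((hasDerivAt_id t).const_mul c).exp).const_mul (a * c ^ n)
      simp only [id] at this
      exact this.congr_deriv (by ring)
    exact h.deriv

theorem stmt19 (d : ℕ) (hd : 1 ≤ d) (b : Fin d → ℝ) (hb : StrictMono b)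
    (hb0 : ∀ i, b i ≠ 0) (κ : Fin d → ℝ) (t : ℝ) :
    (∀ i : Fin d, (∑ j, (b i)⁻¹ * Real.exp (b i * (t + κ j)))
        = (∑ j, Real.exp (b i * κ j)) * ((b i)⁻¹ * Real.exp (b i * t))) ∧
    (|(Matrix.of fun (i k : Fin d) =>
        iteratedDeriv (k.val + 1) (fun u => ∑ j, (b i)⁻¹ * Real.exp (b i * (u + κ j))) t).det|
      = |(Matrix.of fun (i k : Fin d) =>
          iteratedDeriv (k.val + 1) (fun u => (b i)⁻¹ * Real.exp (b i * u)) t).det|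
        * ∏ i, (∑ j, Real.exp (b i * κ j))) ∧
    (∀ j₀ : Fin d,
      |(Matrix.of fun (i k : Fin d) =>
          iteratedDeriv (k.val + 1) (fun u => (b i)⁻¹ * Real.exp (b i * u)) (t + κ j₀)).det|
      ≤ |(Matrix.of fun (i k : Fin d) =>
          iteratedDeriv (k.val + 1) (fun u => ∑ j, (b i)⁻¹ * Real.exp (b i * (u + κ j))) t).det|) := by
  have hne : (Finset.univ : Finset (Fin d)).Nonempty := by
    have : Nonempty (Fin d) := ⟨⟨0, hd⟩⟩
    exact Finset.univ_nonempty
  set E : Fin d → ℝ := fun i => ∑ j, Real.exp (b i * κ j) with hE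
  have hEpos : ∀ i, 0 < E i := fun i =>
    Finset.sum_pos (fun j _ => Real.exp_pos _) hne
  -- pointwise rewriting of the shifted sum function
  have hfun : ∀ i : Fin d, (fun u => ∑ j, (b i)⁻¹ * Real.exp (b i * (u + κ j)))
      = fun u => (E i * (b i)⁻¹) * Real.exp (b i * u) := by
    intro i
    funext u
    rw [hE, Finset.sum_mul, Finset.sum_mul]
    refine Finset.sum_congr rfl fun j _ => ?_
    rw [mul_add, Real.exp_add]
    ring
  have h1 : ∀ i : Fin d, (∑ j, (b i)⁻¹ * Real.exp (b i * (t + κ j)))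
      = E i * ((b i)⁻¹ * Real.exp (b i * t)) := by
    intro i
    have := congrFun (hfun i) t
    rw [this]; ring
  -- matrix entries
  have hMγ : ∀ i k : Fin d,
      iteratedDeriv (k.val + 1) (fun u => ∑ j, (b i)⁻¹ * Real.exp (b i * (u + κ j))) t
      = E i * ((b i)⁻¹ * (b i) ^ (k.val + 1) * Real.exp (b i * t)) := by
    intro i k
    rw [hfun i, itd_exp]
    ring
  have hMΓ : ∀ (s : ℝ) (i k : Fin d),
      iteratedDeriv (k.val + 1) (fun u => (b i)⁻¹ * Real.exp (b i * u)) s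
      = (b i)⁻¹ * (b i) ^ (k.val + 1) * Real.exp (b i * s) := by
    intro s i k
    rw [itd_exp]
  -- determinant identity
  have hdetγ : (Matrix.of fun (i k : Fin d) =>
      iteratedDeriv (k.val + 1) (fun u => ∑ j, (b i)⁻¹ * Real.exp (b i * (u + κ j))) t).det
      = (∏ i, E i) * (Matrix.of fun (i k : Fin d) =>
        iteratedDeriv (k.val + 1) (fun u => (b i)⁻¹ * Real.exp (b i * u)) t).det := by
    have : (Matrix.of fun (i k : Fin d) =>
        iteratedDeriv (k.val + 1) (fun u => ∑ j, (b i)⁻¹ * Real.exp (b i * (u + κ j))) t)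
        = Matrix.of fun i k => E i *
          (Matrix.of fun (i k : Fin d) =>
            iteratedDeriv (k.val + 1) (fun u => (b i)⁻¹ * Real.exp (b i * u)) t) i k := by
      ext i k
      simp only [Matrix.of_apply]
      rw [hMγ, hMΓ]
    rw [this, Matrix.det_mul_column]
  have hprodnn : 0 ≤ ∏ i, E i := Finset.prod_nonneg fun i _ => (hEpos i).le
  have h2 : |(Matrix.of fun (i k : Fin d) =>
        iteratedDeriv (k.val + 1) (fun u => ∑ j, (b i)⁻¹ * Real.exp (b i * (u + κ j))) t).det|
      = |(Matrix.of fun (i k : Fin d) =>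
          iteratedDeriv (k.val + 1) (fun u => (b i)⁻¹ * Real.exp (b i * u)) t).det|
        * ∏ i, E i := by
    rw [hdetγ, abs_mul, abs_of_nonneg hprodnn]
    ring
  refine ⟨h1, h2, fun j₀ => ?_⟩
  -- third part
  have hshift : (Matrix.of fun (i k : Fin d) =>
      iteratedDeriv (k.val + 1) (fun u => (b i)⁻¹ * Real.exp (b i * u)) (t + κ j₀)).det
      = (∏ i, Real.exp (b i * κ j₀)) * (Matrix.of fun (i k : Fin d) =>
        iteratedDeriv (k.val + 1) (fun u => (b i)⁻¹ * Real.exp (b i * u)) t).det := by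
    have : (Matrix.of fun (i k : Fin d) =>
        iteratedDeriv (k.val + 1) (fun u => (b i)⁻¹ * Real.exp (b i * u)) (t + κ j₀))
        = Matrix.of fun i k => Real.exp (b i * κ j₀) *
          (Matrix.of fun (i k : Fin d) =>
            iteratedDeriv (k.val + 1) (fun u => (b i)⁻¹ * Real.exp (b i * u)) t) i k := by
      ext i k
      simp only [Matrix.of_apply]
      rw [hMΓ, hMΓ, mul_add, Real.exp_add]
      ring
    rw [this, Matrix.det_mul_column]
  rw [hshift, h2, abs_mul]
  have hple : (∏ i, Real.exp (b i * κ j₀)) ≤ ∏ i, E i := by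
    refine Finset.prod_le_prod (fun i _ => (Real.exp_pos _).le) fun i _ => ?_
    exact Finset.single_le_sum (fun j _ => (Real.exp_pos ((b i) * κ j)).le)
      (Finset.mem_univ j₀)
  have habs : |∏ i, Real.exp (b i * κ j₀)| = ∏ i, Real.exp (b i * κ j₀) :=
    abs_of_nonneg (Finset.prod_nonneg fun i _ => (Real.exp_pos _).le)
  rw [habs, mul_comm]
  exact mul_le_mul_of_nonneg_left hple (abs_nonneg _)
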